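/- Compatibility of the toric charts of the noncommutative local projective plane: in the localization 𝔸^q⟨a_1^{-1}, a_3^{-1}⟩ the identity a_1 a_3 a_2 · (c_1 a_1^{-1})³ = q^{-6} · c_1 c_3 c_2 holds. (This is the identity G_{01}(w_1 x_1³) = q^{-6} · G_{02}(w_2) showing that the images of the two chart maps G_{01} and G_{02} agree on the overlap.) -/
import Mathlib


/-! Statement 12: affine chart of the noncommutative local projective plane. -/

/-- Generators of the quiver algebra `𝔸^q` localized at `a₁, a₃`:
three idempotents `e₁,e₂,e₃`, nine arrows, and the inverses `a₁⁻¹, a₃⁻¹`. -/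
inductive QGen : Type
  | e1 | e2 | e3
  | a1 | a2 | a3 | b1 | b2 | b3 | c1 | c2 | c3
  | ia1 | ia3
deriving DecidableEq

open QGen

/-- Defining relations of `𝔸^q⟨a₁⁻¹, a₃⁻¹⟩` inside the free algebra. -/
inductive QRel (K : Type) [CommRing K] (q : Kˣ) :
    FreeAlgebra K QGen → FreeAlgebra K QGen → Prop
  | sum : QRel K q (FreeAlgebra.ι K e1 + FreeAlgebra.ι K e2 + FreeAlgebra.ι K e3) 1
  | orth (u v : QGen) : u ≠ v → u ∈ [e1, e2, e3] → v ∈ [e1, e2, e3] →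
      QRel K q (FreeAlgebra.ι K u * FreeAlgebra.ι K v) 0
  | idem (u : QGen) : u ∈ [e1, e2, e3] →
      QRel K q (FreeAlgebra.ι K u * FreeAlgebra.ι K u) (FreeAlgebra.ι K u)
  -- arrows `a₁,b₁,c₁ : 1 → 2`, `a₂,b₂,c₂ : 2 → 3`, `a₃,b₃,c₃ : 3 → 1`
  | cor_a1 : QRel K q (FreeAlgebra.ι K a1)
      (FreeAlgebra.ι K e2 * FreeAlgebra.ι K a1 * FreeAlgebra.ι K e1)
  | cor_b1 : QRel K q (FreeAlgebra.ι K b1)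
      (FreeAlgebra.ι K e2 * FreeAlgebra.ι K b1 * FreeAlgebra.ι K e1)
  | cor_c1 : QRel K q (FreeAlgebra.ι K c1)
      (FreeAlgebra.ι K e2 * FreeAlgebra.ι K c1 * FreeAlgebra.ι K e1)
  | cor_a2 : QRel K q (FreeAlgebra.ι K a2)
      (FreeAlgebra.ι K e3 * FreeAlgebra.ι K a2 * FreeAlgebra.ι K e2)
  | cor_b2 : QRel K q (FreeAlgebra.ι K b2)
      (FreeAlgebra.ι K e3 * FreeAlgebra.ι K b2 * FreeAlgebra.ι K e2)
  | cor_c2 : QRel K q (FreeAlgebra.ι K c2)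
      (FreeAlgebra.ι K e3 * FreeAlgebra.ι K c2 * FreeAlgebra.ι K e2)
  | cor_a3 : QRel K q (FreeAlgebra.ι K a3)
      (FreeAlgebra.ι K e1 * FreeAlgebra.ι K a3 * FreeAlgebra.ι K e3)
  | cor_b3 : QRel K q (FreeAlgebra.ι K b3)
      (FreeAlgebra.ι K e1 * FreeAlgebra.ι K b3 * FreeAlgebra.ι K e3)
  | cor_c3 : QRel K q (FreeAlgebra.ι K c3)
      (FreeAlgebra.ι K e1 * FreeAlgebra.ι K c3 * FreeAlgebra.ι K e3)
  -- the nine superpotential relations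
  | r1 : QRel K q (FreeAlgebra.ι K a3 * FreeAlgebra.ι K b2)
      ((q : K) • (FreeAlgebra.ι K b3 * FreeAlgebra.ι K a2))
  | r2 : QRel K q (FreeAlgebra.ι K a1 * FreeAlgebra.ι K b3)
      ((q : K) • (FreeAlgebra.ι K b1 * FreeAlgebra.ι K a3))
  | r3 : QRel K q (FreeAlgebra.ι K a2 * FreeAlgebra.ι K b1)
      ((q : K) • (FreeAlgebra.ι K b2 * FreeAlgebra.ι K a1))
  | r4 : QRel K q (FreeAlgebra.ι K b2 * FreeAlgebra.ι K c1)
      ((q : K) • (FreeAlgebra.ι K c2 * FreeAlgebra.ι K b1))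
  | r5 : QRel K q (FreeAlgebra.ι K b3 * FreeAlgebra.ι K c2)
      ((q : K) • (FreeAlgebra.ι K c3 * FreeAlgebra.ι K b2))
  | r6 : QRel K q (FreeAlgebra.ι K b1 * FreeAlgebra.ι K c3)
      ((q : K) • (FreeAlgebra.ι K c1 * FreeAlgebra.ι K b3))
  | r7 : QRel K q (FreeAlgebra.ι K c1 * FreeAlgebra.ι K a3)
      ((q : K) • (FreeAlgebra.ι K a1 * FreeAlgebra.ι K c3))
  | r8 : QRel K q (FreeAlgebra.ι K c2 * FreeAlgebra.ι K a1)
      ((q : K) • (FreeAlgebra.ι K a2 * FreeAlgebra.ι K c1))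
  | r9 : QRel K q (FreeAlgebra.ι K c3 * FreeAlgebra.ι K a2)
      ((q : K) • (FreeAlgebra.ι K a3 * FreeAlgebra.ι K c2))
  -- localization at a₁ (tail 1, head 2) and a₃ (tail 3, head 1)
  | inv_a1_left : QRel K q (FreeAlgebra.ι K ia1 * FreeAlgebra.ι K a1) (FreeAlgebra.ι K e1)
  | inv_a1_right : QRel K q (FreeAlgebra.ι K a1 * FreeAlgebra.ι K ia1) (FreeAlgebra.ι K e2)
  | inv_a1_cor : QRel K q (FreeAlgebra.ι K ia1)
      (FreeAlgebra.ι K e1 * FreeAlgebra.ι K ia1 * FreeAlgebra.ι K e2)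
  | inv_a3_left : QRel K q (FreeAlgebra.ι K ia3 * FreeAlgebra.ι K a3) (FreeAlgebra.ι K e3)
  | inv_a3_right : QRel K q (FreeAlgebra.ι K a3 * FreeAlgebra.ι K ia3) (FreeAlgebra.ι K e1)
  | inv_a3_cor : QRel K q (FreeAlgebra.ι K ia3)
      (FreeAlgebra.ι K e3 * FreeAlgebra.ι K ia3 * FreeAlgebra.ι K e1)

/-- The localized quiver algebra `𝔸^q⟨a₁⁻¹, a₃⁻¹⟩`. -/
abbrev QAlg (K : Type) [CommRing K] (q : Kˣ) := RingQuot (QRel K q)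

/-- The image of a generator in `𝔸^q⟨a₁⁻¹, a₃⁻¹⟩`. -/
def qel (K : Type) [CommRing K] (q : Kˣ) (x : QGen) : QAlg K q :=
  RingQuot.mkAlgHom K (QRel K q) (FreeAlgebra.ι K x)

/-- Generators of the noncommutative `ℂ³` algebra `K⟨x₁,y₁,w₁⟩`. -/
inductive C3Gen : Type
  | x1 | y1 | w1
deriving DecidableEq


/-- Compatibility of the toric charts of the noncommutative local projective
plane: in `𝔸^q⟨a₁⁻¹, a₃⁻¹⟩` one has `a₁a₃a₂ · (c₁a₁⁻¹)³ = q⁻⁶ · c₁c₃c₂`, i.e.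
`G₀₁(w₁x₁³) = q⁻⁶ · G₀₂(w₂)`. -/
theorem nc_local_P2_chart_compatibility (K : Type) [CommRing K] (q : Kˣ) :
    qel K q a1 * qel K q a3 * qel K q a2 * (qel K q c1 * qel K q ia1) ^ 3
      = (((q⁻¹ : Kˣ) : K) ^ 6) • (qel K q c1 * qel K q c3 * qel K q c2) := by
  have qrel : ∀ {x y : FreeAlgebra K QGen}, QRel K q x y →
      RingQuot.mkAlgHom K (QRel K q) x = RingQuot.mkAlgHom K (QRel K q) y :=
    fun h => RingQuot.mkAlgHom_rel K h
  have r7 : qel K q c1 * qel K q a3 = (q : K) • (qel K q a1 * qel K q c3) := by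
    simpa [qel, map_mul] using qrel QRel.r7
  have r8 : qel K q c2 * qel K q a1 = (q : K) • (qel K q a2 * qel K q c1) := by
    simpa [qel, map_mul] using qrel QRel.r8
  have r9 : qel K q c3 * qel K q a2 = (q : K) • (qel K q a3 * qel K q c2) := by
    simpa [qel, map_mul] using qrel QRel.r9
  have hc2 : qel K q c2 = qel K q e3 * qel K q c2 * qel K q e2 := by
    simpa [qel, map_mul] using qrel QRel.cor_c2
  have he2 : qel K q e2 * qel K q e2 = qel K q e2 := by
    simpa [qel, map_mul] using qrel (QRel.idem e2 (by simp))
  have ha1 : qel K q a1 * qel K q ia1 = qel K q e2 := by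
    simpa [qel, map_mul] using qrel QRel.inv_a1_right
  have hc2e2 : qel K q c2 * qel K q e2 = qel K q c2 := by
    calc qel K q c2 * qel K q e2
        = qel K q e3 * qel K q c2 * qel K q e2 * qel K q e2 := by rw [← hc2]
      _ = qel K q e3 * qel K q c2 * (qel K q e2 * qel K q e2) := by
          rw [mul_assoc]
      _ = qel K q e3 * qel K q c2 * qel K q e2 := by rw [he2]
      _ = qel K q c2 := hc2.symm
  -- H1 : c2 = q • (a2 * (c1 * ia1))
  have H1 : qel K q c2 = (q : K) • (qel K q a2 * (qel K q c1 * qel K q ia1)) := by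
    calc qel K q c2
        = qel K q c2 * qel K q e2 := hc2e2.symm
      _ = qel K q c2 * (qel K q a1 * qel K q ia1) := by rw [ha1]
      _ = qel K q c2 * qel K q a1 * qel K q ia1 := by rw [mul_assoc]
      _ = (q : K) • (qel K q a2 * qel K q c1) * qel K q ia1 := by rw [r8]
      _ = (q : K) • (qel K q a2 * (qel K q c1 * qel K q ia1)) := by
          rw [smul_mul_assoc, mul_assoc]
  set A1 := qel K q a1
  set A2 := qel K q a2
  set A3 := qel K q a3
  set C1 := qel K q c1
  set C2 := qel K q c2
  set C3 := qel K q c3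
  set I1 := qel K q ia1
  have key : C1 * C3 * C2
      = ((q : K) ^ 6) • (A1 * A3 * A2 * (C1 * I1) ^ 3) := by
    calc C1 * C3 * C2
        = C1 * C3 * ((q : K) • (A2 * (C1 * I1))) := by rw [← H1]
      _ = (q : K) • (C1 * (C3 * A2) * (C1 * I1)) := by
          simp [mul_smul_comm, mul_assoc]
      _ = (q : K) • (C1 * ((q : K) • (A3 * C2)) * (C1 * I1)) := by rw [r9]
      _ = ((q : K) ^ 2) • (C1 * A3 * C2 * (C1 * I1)) := by
          simp [mul_smul_comm, smul_mul_assoc, smul_smul, mul_assoc, pow_succ]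
      _ = ((q : K) ^ 2) • (C1 * A3 *
            ((q : K) • (A2 * (C1 * I1))) * (C1 * I1)) := by rw [← H1]
      _ = ((q : K) ^ 3) • (C1 * A3 * A2 * (C1 * I1) * (C1 * I1)) := by
          simp [mul_smul_comm, smul_mul_assoc, smul_smul, mul_assoc, pow_succ]
      _ = ((q : K) ^ 3) • (((q : K) • (A1 * C3)) * A2 * (C1 * I1) * (C1 * I1)) := by
          rw [r7]
      _ = ((q : K) ^ 4) • (A1 * (C3 * A2) * (C1 * I1) * (C1 * I1)) := by
          simp [mul_smul_comm, smul_mul_assoc, smul_smul, mul_assoc, pow_succ]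
      _ = ((q : K) ^ 4) • (A1 * ((q : K) • (A3 * C2)) * (C1 * I1) * (C1 * I1)) := by
          rw [r9]
      _ = ((q : K) ^ 5) • (A1 * A3 * C2 * (C1 * I1) * (C1 * I1)) := by
          simp [mul_smul_comm, smul_mul_assoc, smul_smul, mul_assoc, pow_succ]
      _ = ((q : K) ^ 5) • (A1 * A3 * ((q : K) • (A2 * (C1 * I1)))
            * (C1 * I1) * (C1 * I1)) := by rw [← H1]
      _ = ((q : K) ^ 6) • (A1 * A3 * A2 * (C1 * I1) ^ 3) := by
          simp [mul_smul_comm, smul_mul_assoc, smul_smul, mul_assoc, pow_succ]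
  rw [key, smul_smul, ← mul_pow]
  norm_num
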